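/- Let G be the quaternion group of order 8 with generators x, y (x⁴ = 1, yxy⁻¹ = x⁻¹, x² = y²) and H the dihedral group of order 8 with generators a, b (a⁴ = b² = 1, bab⁻¹ = a⁻¹). Let D ≤ G × H be the subgroup generated by (x,a) and (y,b), and let C be a cyclic group of order 4 with generator c. Then there exists a group homomorphism δ : D → C with δ(x,a) = c² and δ(y,b) = c⁻¹; moreover for any such δ: if (g,1) ∈ D and δ(g,1) = 1 then g = 1, and if (1,h) ∈ D and δ(1,h) = 1 then h = 1. Since G and H are not isomorphic, this exhibits, for C of order 4, non-isomorphic groups G, H of equal order admitting such a pair (D, δ). -/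

import Mathlib

open QuaternionGroup DihedralGroup

/-- The subgroup `D` of `Q₈ × D₈` generated by `(x,a)` and `(y,b)`, where
`x = a 1`, `y = xa 0` generate the quaternion group and `a = r 1`, `b = sr 0`
generate the dihedral group. -/
def Dqd : Subgroup (QuaternionGroup 2 × DihedralGroup 4) :=
  Subgroup.closure {(a 1, r 1), (xa 0, sr 0)}

set_option maxRecDepth 20000

def Pqd : QuaternionGroup 2 × DihedralGroup 4 → Prop
  | (a i, r j) => i = j ∨ i = j + 2
  | (xa i, sr j) => i = j ∨ i = j + 2
  | _ => False

instance : DecidablePred Pqd := by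
  rintro ⟨g | g, h | h⟩ <;> simp [Pqd] <;> infer_instance

def Fqd : QuaternionGroup 2 × DihedralGroup 4 → ZMod 4
  | (a i, r j) => i + j
  | (xa i, sr j) => 3 - i - j
  | _ => 0


lemma P_of_mem : ∀ p ∈ Dqd, Pqd p := by
  intro p hp
  induction hp using Subgroup.closure_induction with
  | mem x hx => rcases hx with h | h <;> subst h <;> decide
  | one => decide
  | mul x y hx hy px py => exact (by decide : ∀ p q, Pqd p → Pqd q → Pqd (p * q)) x y px py
  | inv x hx px => exact (by decide : ∀ p, Pqd p → Pqd p⁻¹) x px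

lemma Fqd_mul : ∀ p q, Pqd p → Pqd q → Fqd (p * q) = Fqd p + Fqd q := by decide
lemma Fqd_inv : ∀ p, Pqd p → Fqd p⁻¹ = - Fqd p := by decide


/-- Let `C = ⟨c⟩` be cyclic of order 4.  There is a homomorphism
`δ : D → C` with `δ(x,a) = c²` and `δ(y,b) = c⁻¹`; any such `δ` satisfies
`k₁(D_δ) = 1` and `k₂(D_δ) = 1`; and `Q₈ ≇ D₈` while `|Q₈| = |D₈|`, so this
exhibits two non-isomorphic minimal groups of equal order. -/
theorem quaternion_dihedral_counterexample
    {C : Type*} [Group C] (c : C) (hc : orderOf c = 4)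
    (hgen : ∀ z : C, z ∈ Subgroup.zpowers c) :
    (∃ δ : Dqd →* C,
      (∀ hm : ((a 1 : QuaternionGroup 2), (r 1 : DihedralGroup 4)) ∈ Dqd,
        δ ⟨_, hm⟩ = c ^ 2) ∧
      (∀ hm : ((xa 0 : QuaternionGroup 2), (sr 0 : DihedralGroup 4)) ∈ Dqd,
        δ ⟨_, hm⟩ = c⁻¹)) ∧
    (∀ δ : Dqd →* C,
      (∀ hm : ((a 1 : QuaternionGroup 2), (r 1 : DihedralGroup 4)) ∈ Dqd,
        δ ⟨_, hm⟩ = c ^ 2) →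
      (∀ hm : ((xa 0 : QuaternionGroup 2), (sr 0 : DihedralGroup 4)) ∈ Dqd,
        δ ⟨_, hm⟩ = c⁻¹) →
      (∀ (g : QuaternionGroup 2) (hm : (g, (1 : DihedralGroup 4)) ∈ Dqd),
        δ ⟨_, hm⟩ = 1 → g = 1) ∧
      (∀ (h : DihedralGroup 4) (hm : ((1 : QuaternionGroup 2), h) ∈ Dqd),
        δ ⟨_, hm⟩ = 1 → h = 1)) ∧
    ¬ Nonempty (QuaternionGroup 2 ≃* DihedralGroup 4) ∧
    Nat.card (QuaternionGroup 2) = Nat.card (DihedralGroup 4) := by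
  have hc4 : c ^ 4 = 1 := hc ▸ pow_orderOf_eq_one c
  have key : ∀ x y : ZMod 4, c ^ (x + y).val = c ^ x.val * c ^ y.val := by
    intro x y
    rw [← pow_add]
    calc c ^ (x + y).val = c ^ ((x.val + y.val) % orderOf c) := by rw [ZMod.val_add, hc]
      _ = c ^ (x.val + y.val) := pow_mod_orderOf _ _
  have hcinv : c ^ (3 : ℕ) = c⁻¹ := by
    refine eq_inv_of_mul_eq_one_left ?_
    rw [← pow_succ]; exact hc4
  have keyinv : ∀ x : ZMod 4, c ^ (-x).val = (c ^ x.val)⁻¹ := by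
    intro x
    refine eq_inv_of_mul_eq_one_left ?_
    rw [← key, neg_add_cancel]
    simp
  -- the explicit homomorphism
  set δ0 : Dqd →* C :=
    { toFun := fun p => c ^ (Fqd p.1).val
      map_one' := by norm_num [show Fqd 1 = 0 by decide]
      map_mul' := fun p q => by
        show c ^ (Fqd (p.1 * q.1)).val = c ^ (Fqd p.1).val * c ^ (Fqd q.1).val
        rw [Fqd_mul p.1 q.1 (P_of_mem _ p.2) (P_of_mem _ q.2), key] } with hδ0
  have hδ0u : ∀ p : Dqd, δ0 p = c ^ (Fqd p.1).val := fun _ => rfl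
  have hval : ∀ δ : Dqd →* C,
      (∀ hm : ((a 1 : QuaternionGroup 2), (r 1 : DihedralGroup 4)) ∈ Dqd,
        δ ⟨_, hm⟩ = c ^ 2) →
      (∀ hm : ((xa 0 : QuaternionGroup 2), (sr 0 : DihedralGroup 4)) ∈ Dqd,
        δ ⟨_, hm⟩ = c⁻¹) →
      ∀ p (hp : p ∈ Dqd), δ ⟨p, hp⟩ = c ^ (Fqd p).val := by
    intro δ h1 h2 p hp
    induction hp using Subgroup.closure_induction with
    | mem x hx =>
      rcases hx with h | h <;> subst h
      · refine (h1 _).trans ?_; rw [show (Fqd (a 1, r 1)).val = 2 by decide]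
      · refine (h2 _).trans ?_; rw [show (Fqd (xa 0, sr 0)).val = 3 by decide, hcinv]
    | one =>
      rw [show (⟨1, Subgroup.one_mem _⟩ : Dqd) = 1 from rfl, map_one]
      norm_num [show Fqd 1 = 0 by decide]
    | mul x y hx hy px py =>
      rw [show (⟨x * y, mul_mem hx hy⟩ : Dqd) = ⟨x, hx⟩ * ⟨y, hy⟩ from rfl, map_mul,
        px, py, Fqd_mul x y (P_of_mem _ hx) (P_of_mem _ hy), key]
    | inv x hx px =>
      rw [show (⟨x⁻¹, inv_mem hx⟩ : Dqd) = (⟨x, hx⟩ : Dqd)⁻¹ from rfl, map_inv,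
        px, Fqd_inv x (P_of_mem _ hx), keyinv]
  have hzero : ∀ x : ZMod 4, c ^ x.val = 1 → x = 0 := by
    intro x hx
    have h4 : orderOf c ∣ x.val := orderOf_dvd_of_pow_eq_one hx
    rw [hc] at h4
    exact (ZMod.val_eq_zero x).mp (Nat.eq_zero_of_dvd_of_lt h4 (ZMod.val_lt x))
  refine ⟨⟨δ0, ?_, ?_⟩, ?_, ?_, ?_⟩
  · intro hm; rw [hδ0u, show (Fqd (a 1, r 1)).val = 2 by decide]
  · intro hm; rw [hδ0u, show (Fqd (xa 0, sr 0)).val = 3 by decide, hcinv]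
  · intro δ h1 h2
    constructor
    · intro g hm hone
      rw [hval δ h1 h2 _ hm] at hone
      exact (by decide : ∀ g, Pqd (g, (1 : DihedralGroup 4)) → Fqd (g, 1) = 0 → g = 1)
        g (P_of_mem _ hm) (hzero _ hone)
    · intro h hm hone
      rw [hval δ h1 h2 _ hm] at hone
      exact (by decide : ∀ h, Pqd ((1 : QuaternionGroup 2), h) → Fqd (1, h) = 0 → h = 1)
        h (P_of_mem _ hm) (hzero _ hone)
  · rintro ⟨e⟩
    have key2 : ∀ g : QuaternionGroup 2, g * g = 1 → g = 1 ∨ g = a 2 := by decide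
    have hs : ∀ j : ZMod 4, e.symm (sr j) = a 2 := by
      intro j
      have h1 : e.symm (sr j) * e.symm (sr j) = 1 := by
        rw [← map_mul, sr_mul_self, map_one]
      rcases key2 _ h1 with h | h
      · have : sr j = (1 : DihedralGroup 4) := e.symm.injective (by rw [h, map_one])
        exact absurd this (by rw [DihedralGroup.one_def]; intro h; cases h)
      · exact h
    have h01 : (sr 0 : DihedralGroup 4) = sr 1 := e.symm.injective ((hs 0).trans (hs 1).symm)
    exact absurd h01 (by decide)
  · rw [Nat.card_eq_fintype_card, Nat.card_eq_fintype_card, QuaternionGroup.card,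
      DihedralGroup.card]
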